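/- arXiv:2206.04986 — 2 statements merged into one kernel-verified Lean document; each statement's English description precedes it below -/
import Mathlib

section
/- Existence of a minimizer for the initial functional: there exists ȳ ∈ H_I(x,t) such that A(x,t) = ∫₀ᵗ e^{−β(θ)} f*(f'(h(x−ȳ,t) e^{β(θ)})) dθ + U₀(ȳ), where A(x,t) = inf_{y ∈ H_I} A(y,x,t). -/
open Real Set Filter intervalIntegral

/-- Convex conjugate of `f`. -/
noncomputable def conjFn (f : ℝ → ℝ) (u : ℝ) : ℝ := ⨆ v : ℝ, (u * v - f v)

/-- Supporting line inequality for a differentiable convex function. -/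
lemma support_line {f : ℝ → ℝ} (hconv : ConvexOn ℝ Set.univ f)
    (hd : Differentiable ℝ f) (w v : ℝ) :
    deriv f w * (v - w) ≤ f v - f w := by
  rcases lt_trichotomy v w with hvw | hvw | hvw
  · have := hconv.slope_le_deriv (mem_univ v) (mem_univ w) hvw (hd w)
    rw [slope_def_field] at this
    have hne : w - v > 0 := by linarith
    rw [div_le_iff₀ hne] at this
    nlinarith
  · simp [hvw]
  · have := hconv.deriv_le_slope (mem_univ w) (mem_univ v) hvw (hd w)
    rw [slope_def_field] at this
    have hne : v - w > 0 := by linarith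
    rw [le_div_iff₀ hne] at this
    nlinarith

/-- Fenchel equality: at points in the range of the derivative, the conjugate
is attained at the corresponding point. -/
lemma conjFn_deriv {f : ℝ → ℝ} (hconv : ConvexOn ℝ Set.univ f)
    (hd : Differentiable ℝ f) (w : ℝ) :
    conjFn f (deriv f w) = deriv f w * w - f w := by
  have hub : ∀ v : ℝ, deriv f w * v - f v ≤ deriv f w * w - f w := by
    intro v
    have := support_line hconv hd w v
    nlinarith
  refine le_antisymm (ciSup_le hub) ?_
  exact le_ciSup ⟨deriv f w * w - f w, by rintro a ⟨v, rfl⟩; exact hub v⟩ w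

/-- Existence of a minimizer of the initial functional
`A(y,x,t) = ∫₀ᵗ e^{-β θ} f*(f'(h(x-y,t) e^{β θ})) dθ + U₀(y)` over the
admissible set `H_I(x,t)`: there is `ȳ ∈ H_I` with `A(ȳ,x,t) = inf_{H_I} A`.
Here `h w` is the `h`-curve parameter for displacement `w` in time `t`, and
`U₀(y) = ∫₀^y u₀`. -/
theorem initial_functional_minimizer_exists (f β u₀ h : ℝ → ℝ)
    (hf : ContDiff ℝ 2 f)
    (hconv : StrictConvexOn ℝ Set.univ f)
    (hsuper : Tendsto (fun u => f u / |u|) (cocompact ℝ) atTop)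
    (hβ : Continuous β)
    (hu₀ : ∃ M, ∀ y, |u₀ y| ≤ M) (hu₀m : Measurable u₀)
    (x t : ℝ) (hx : 0 ≤ x) (ht : 0 < t)
    (hh : ∀ w : ℝ, w = ∫ θ in (0:ℝ)..t, deriv f (h w * Real.exp (β θ)))
    (hhcont : Continuous h) :
    let A : ℝ → ℝ := fun y =>
      (∫ θ in (0:ℝ)..t,
        Real.exp (-β θ) * conjFn f (deriv f (h (x - y) * Real.exp (β θ)))) +
      ∫ z in (0:ℝ)..y, u₀ z
    let HI : Set ℝ := {y | 0 ≤ y ∧ ∀ τ ∈ Set.Icc (0:ℝ) t,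
      0 ≤ ∫ θ in (0:ℝ)..τ, deriv f (h (x - y) * Real.exp (β θ))}
    HI.Nonempty → ∃ ybar ∈ HI, A ybar = sInf (A '' HI) := by
  intro A HI hne
  have hd : Differentiable ℝ f := hf.differentiable (by norm_num)
  have hdc : Continuous (deriv f) := hf.continuous_deriv (by norm_num)
  -- rewrite A using the Fenchel equality
  have hAeq : A = fun y =>
      (∫ θ in (0:ℝ)..t, Real.exp (-β θ) *
        (deriv f (h (x - y) * Real.exp (β θ)) * (h (x - y) * Real.exp (β θ)) -
          f (h (x - y) * Real.exp (β θ)))) +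
      ∫ z in (0:ℝ)..y, u₀ z := by
    funext y
    simp only [A]
    congr 1
    apply intervalIntegral.integral_congr
    intro θ _
    dsimp only
    rw [conjFn_deriv hconv.convexOn hd]
  -- continuity of A
  have hg : Continuous fun w : ℝ => deriv f w * w - f w :=
    ((hdc.mul continuous_id).sub hf.continuous)
  have hcont1 : Continuous fun y : ℝ =>
      ∫ θ in (0:ℝ)..t, Real.exp (-β θ) *
        (deriv f (h (x - y) * Real.exp (β θ)) * (h (x - y) * Real.exp (β θ)) -
          f (h (x - y) * Real.exp (β θ))) := by
    apply intervalIntegral.continuous_parametric_intervalIntegral_of_continuous'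
    apply Continuous.mul
    · exact (hβ.comp continuous_snd).neg.rexp
    · exact hg.comp
        ((hhcont.comp (continuous_const.sub continuous_fst)).mul
          ((hβ.comp continuous_snd).rexp))
  obtain ⟨M, hM⟩ := hu₀
  have hint : ∀ a b : ℝ, IntervalIntegrable u₀ MeasureTheory.volume a b := by
    intro a b
    constructor <;>
    · apply MeasureTheory.Measure.integrableOn_of_bounded (M := M)
      · exact measure_Ioc_lt_top.ne
      · exact hu₀m.aestronglyMeasurable
      · exact Filter.Eventually.of_forall fun z => by
          simpa [Real.norm_eq_abs] using hM z
  have hcont2 : Continuous fun y : ℝ => ∫ z in (0:ℝ)..y, u₀ z :=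
    intervalIntegral.continuous_primitive hint 0
  have hAcont : Continuous A := by
    rw [hAeq]; exact hcont1.add hcont2
  -- HI is closed
  have hGcont : ∀ τ : ℝ, Continuous fun y : ℝ =>
      ∫ θ in (0:ℝ)..τ, deriv f (h (x - y) * Real.exp (β θ)) := by
    intro τ
    apply intervalIntegral.continuous_parametric_intervalIntegral_of_continuous'
    exact hdc.comp
      ((hhcont.comp (continuous_const.sub continuous_fst)).mul
        ((hβ.comp continuous_snd).rexp))
  have hHIclosed : IsClosed HI := by
    have : HI = {y : ℝ | 0 ≤ y} ∩
        ⋂ τ ∈ Set.Icc (0:ℝ) t,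
          {y : ℝ | 0 ≤ ∫ θ in (0:ℝ)..τ, deriv f (h (x - y) * Real.exp (β θ))} := by
      ext y; simp [HI, Set.mem_iInter, forall_and]
    rw [this]
    refine (isClosed_le continuous_const continuous_id).inter ?_
    exact isClosed_biInter fun τ _ =>
      isClosed_le continuous_const (hGcont τ)
  -- HI ⊆ Icc 0 x
  have hsub : HI ⊆ Set.Icc 0 x := by
    intro y hy
    refine ⟨hy.1, ?_⟩
    have h2 := hy.2 t ⟨le_of_lt ht, le_refl t⟩
    rw [← hh (x - y)] at h2
    linarith
  have hHIcomp : IsCompact HI := isCompact_Icc.of_isClosed_subset hHIclosed hsub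
  obtain ⟨ybar, hmem, hmin⟩ := hHIcomp.exists_isMinOn hne hAcont.continuousOn
  refine ⟨ybar, hmem, ?_⟩
  symm
  apply IsLeast.csInf_eq
  constructor
  · exact ⟨ybar, hmem, rfl⟩
  · rintro a ⟨y, hy, rfl⟩
    exact hmin hy
end

section
/- Time-derivative of the h-action: the function F(r) = ∫_τ^r f*(f'(h(x−y, r, τ) e^{β(θ)})) e^{−β(θ)} dθ is differentiable in r and F'(r) = − f(h(x−y, r, τ) e^{β(r)}) e^{−β(r)}, provided h(x−y, r, τ) is the h-parameter for fixed displacement x−y between times τ and r. -/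
open Real Set Filter Topology intervalIntegral

lemma tangent_le {f : ℝ → ℝ} (hfd : Differentiable ℝ f)
    (hconv : StrictConvexOn ℝ Set.univ f) (u v : ℝ) :
    deriv f u * v - f v ≤ deriv f u * u - f u := by
  have hc := hconv.convexOn
  rcases lt_trichotomy u v with hlt | heq | hgt
  · have := hc.deriv_le_slope (mem_univ u) (mem_univ v) hlt (hfd u)
    rw [slope_def_field] at this
    have hne : v - u ≠ 0 := sub_ne_zero.mpr (ne_of_gt hlt)
    have : deriv f u * (v - u) ≤ f v - f u := by
      have h2 := mul_le_mul_of_nonneg_right this (le_of_lt (sub_pos.mpr hlt))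
      rwa [div_mul_cancel₀ _ hne] at h2
    linarith [mul_sub (deriv f u) v u]
  · simp [heq]
  · have := hc.slope_le_deriv (mem_univ v) (mem_univ u) hgt (hfd u)
    rw [slope_def_field] at this
    have hne : u - v ≠ 0 := sub_ne_zero.mpr (ne_of_gt hgt)
    have : f u - f v ≤ deriv f u * (u - v) := by
      have h2 := mul_le_mul_of_nonneg_right this (le_of_lt (sub_pos.mpr hgt))
      rwa [div_mul_cancel₀ _ hne] at h2
    linarith [mul_sub (deriv f u) u v]

lemma conj_deriv {f : ℝ → ℝ} (hfd : Differentiable ℝ f)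
    (hconv : StrictConvexOn ℝ Set.univ f) (u : ℝ) :
    conjFn f (deriv f u) = u * deriv f u - f u := by
  have hb : ∀ v : ℝ, deriv f u * v - f v ≤ u * deriv f u - f u := by
    intro v
    have := tangent_le hfd hconv u v
    linarith [mul_comm (deriv f u) u]
  refine le_antisymm (ciSup_le hb) ?_
  have := le_ciSup ⟨u * deriv f u - f u, forall_mem_range.2 hb⟩ u
    (f := fun v => deriv f u * v - f v)
  calc u * deriv f u - f u = deriv f u * u - f u := by ring
  _ ≤ _ := this


lemma hasDerivAt_param_endpoint {ψ : ℝ × ℝ → ℝ} (hψ : Continuous ψ) (r : ℝ) :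
    HasDerivAt (fun s => ∫ θ in r..s, ψ (s, θ)) (ψ (r, r)) r := by
  rw [hasDerivAt_iff_isLittleO, Asymptotics.isLittleO_iff]
  intro ε hε
  have hc : ContinuousAt ψ (r, r) := hψ.continuousAt
  have hmem : {q : ℝ × ℝ | ‖ψ q - ψ (r, r)‖ ≤ ε} ∈ 𝓝 (r, r) := by
    have : {q : ℝ × ℝ | ψ q - ψ (r, r) ∈ Metric.closedBall (0:ℝ) ε} ∈ 𝓝 (r, r) := by
      apply (hc.sub continuousAt_const).preimage_mem_nhds
      simp only [Pi.sub_apply, sub_self]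
      exact Metric.closedBall_mem_nhds (0:ℝ) hε
    simpa [Metric.mem_closedBall, dist_eq_norm] using this
  obtain ⟨δ, hδ, hball⟩ := Metric.mem_nhds_iff.mp hmem
  filter_upwards [Metric.ball_mem_nhds r hδ] with s hs
  have hs' : |s - r| < δ := by simpa [Real.dist_eq] using hs
  have hbound : ∀ θ ∈ uIoc r s, ‖ψ (s, θ) - ψ (r, r)‖ ≤ ε := by
    intro θ hθ
    have hθ' : θ ∈ uIcc r s := uIoc_subset_uIcc hθ
    have habs : |θ - r| ≤ |s - r| := by
      rcases le_total r s with h1 | h1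
      · rw [uIcc_of_le h1] at hθ'
        rw [abs_of_nonneg (by linarith [hθ'.1]), abs_of_nonneg (by linarith)]
        linarith [hθ'.2]
      · rw [uIcc_of_ge h1] at hθ'
        rw [abs_of_nonpos (by linarith [hθ'.2]), abs_of_nonpos (by linarith)]
        linarith [hθ'.1]
    refine hball ?_
    rw [Metric.mem_ball, Prod.dist_eq]
    simp only [Real.dist_eq]
    exact max_lt hs' (lt_of_le_of_lt habs hs')
  have hint : ∀ u : ℝ, IntervalIntegrable (fun θ => ψ (u, θ)) MeasureTheory.volume r s :=
    fun u => (hψ.comp (continuous_const.prodMk continuous_id)).intervalIntegrable r s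
  have key : (∫ θ in r..s, ψ (s, θ)) - (s - r) • ψ (r, r)
      = ∫ θ in r..s, (ψ (s, θ) - ψ (r, r)) := by
    rw [intervalIntegral.integral_sub (hint s) intervalIntegrable_const,
      intervalIntegral.integral_const]
  have := intervalIntegral.norm_integral_le_of_norm_le_const hbound
  simp only [intervalIntegral.integral_same, sub_zero]
  rw [key]
  calc ‖∫ θ in r..s, (ψ (s, θ) - ψ (r, r))‖ ≤ ε * |s - r| := this
  _ = ε * ‖s - r‖ := by rw [Real.norm_eq_abs]

lemma hasDerivAt_psi {f β : ℝ → ℝ} (hf : ContDiff ℝ 2 f) (hβc : Continuous β)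
    (τ r p₀ : ℝ) :
    HasDerivAt (fun p => ∫ θ in τ..r, f (p * Real.exp (β θ)) * Real.exp (-β θ))
      (∫ θ in τ..r, deriv f (p₀ * Real.exp (β θ))) p₀ := by
  have hfc : Continuous f := hf.continuous
  have hfd : Differentiable ℝ f := hf.differentiable (by norm_num)
  have hdc : Continuous (deriv f) := hf.continuous_deriv (by norm_num)
  have hE : Continuous fun θ : ℝ => Real.exp (β θ) := Real.continuous_exp.comp hβc
  have hEn : Continuous fun θ : ℝ => Real.exp (-β θ) := Real.continuous_exp.comp hβc.neg
  -- bound from compactness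
  have hK : IsCompact ((Metric.closedBall p₀ 1) ×ˢ (uIcc τ r)) :=
    (isCompact_closedBall _ _).prod isCompact_uIcc
  have hg : Continuous fun q : ℝ × ℝ => deriv f (q.1 * Real.exp (β q.2)) :=
    hdc.comp (continuous_fst.mul (Real.continuous_exp.comp (hβc.comp continuous_snd)))
  obtain ⟨C, hC⟩ := hK.exists_bound_of_continuousOn hg.continuousOn
  have main := intervalIntegral.hasDerivAt_integral_of_dominated_loc_of_deriv_le
    (F := fun p t => f (p * Real.exp (β t)) * Real.exp (-β t))
    (F' := fun p t => deriv f (p * Real.exp (β t)))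
    (bound := fun _ => C) (μ := MeasureTheory.volume) (a := τ) (b := r)
    (Metric.ball_mem_nhds p₀ zero_lt_one)
    (Filter.Eventually.of_forall fun p =>
      ((hfc.comp (continuous_const.mul hE)).mul hEn).aestronglyMeasurable.restrict)
    (((hfc.comp (continuous_const.mul hE)).mul hEn).intervalIntegrable τ r)
    ((hdc.comp (continuous_const.mul hE)).aestronglyMeasurable.restrict)
    (MeasureTheory.ae_of_all _ fun t ht p hp => by
      have : (p, t) ∈ (Metric.closedBall p₀ 1) ×ˢ (uIcc τ r) :=
        ⟨Metric.ball_subset_closedBall hp, uIoc_subset_uIcc ht⟩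
      exact hC (p, t) this)
    intervalIntegrable_const
    (MeasureTheory.ae_of_all _ fun t ht p hp => by
      have h1 : HasDerivAt (fun x : ℝ => x * Real.exp (β t)) (Real.exp (β t)) p :=
        hasDerivAt_mul_const _
      have h2 := ((hfd _).hasDerivAt).comp p h1
      have h3 := h2.mul_const (Real.exp (-β t))
      have hone : Real.exp (β t) * Real.exp (-β t) = 1 := by
        rw [← Real.exp_add]; simp
      rw [mul_assoc, hone, mul_one] at h3
      exact h3)
  exact main.2



/-- Time derivative of the `h`-action: with `h r` the `h`-curve parameter for
the fixed displacement `x - y` between times `τ` and `r`, the function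
`F(r) = ∫_τ^r f*(f'(h r · e^{β θ})) e^{-β θ} dθ` is differentiable with
`F'(r) = -f(h r · e^{β r}) e^{-β r}`. -/
theorem haction_time_derivative (f β h : ℝ → ℝ)
    (hf : ContDiff ℝ 2 f)
    (hconv : StrictConvexOn ℝ Set.univ f)
    (hsuper : Tendsto (fun u => f u / |u|) (cocompact ℝ) atTop)
    (hβ : ContDiff ℝ 1 β)
    (x y τ : ℝ)
    (hh : ∀ s, τ < s → x - y = ∫ θ in τ..s, deriv f (h s * Real.exp (β θ)))
    (hhd : Differentiable ℝ h)
    (r : ℝ) (hr : τ < r) :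
    HasDerivAt
      (fun s => ∫ θ in τ..s,
        conjFn f (deriv f (h s * Real.exp (β θ))) * Real.exp (-β θ))
      (-(f (h r * Real.exp (β r)) * Real.exp (-β r))) r := by
  have hβc : Continuous β := hβ.continuous
  have hfc : Continuous f := hf.continuous
  have hfd : Differentiable ℝ f := hf.differentiable (by norm_num)
  have hdc : Continuous (deriv f) := hf.continuous_deriv (by norm_num)
  have hhc : Continuous h := hhd.continuous
  set ψ : ℝ × ℝ → ℝ := fun q => f (h q.1 * Real.exp (β q.2)) * Real.exp (-β q.2) with hψdef
  have hψc : Continuous ψ :=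
    (hfc.comp ((hhc.comp continuous_fst).mul
      (Real.continuous_exp.comp (hβc.comp continuous_snd)))).mul
      (Real.continuous_exp.comp (hβc.comp continuous_snd).neg)
  set c : ℝ := f (h r * Real.exp (β r)) * Real.exp (-β r) with hcdef
  set Ψ : ℝ → ℝ := fun p => ∫ θ in τ..r, f (p * Real.exp (β θ)) * Real.exp (-β θ) with hΨdef
  set B : ℝ → ℝ := fun s => ∫ θ in r..s, ψ (s, θ) with hBdef
  -- derivative of B
  have hB : HasDerivAt B c r := by
    have := hasDerivAt_param_endpoint hψc r
    simpa [hψdef, hcdef] using this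
  -- derivative of Ψ ∘ h
  have hΨ : HasDerivAt Ψ (x - y) (h r) := by
    have := hasDerivAt_psi hf hβc τ r (h r)
    rwa [← hh r hr] at this
  have hΨc : HasDerivAt (fun s => Ψ (h s)) ((x - y) * deriv h r) r :=
    hΨ.comp r (hhd r).hasDerivAt
  have hlin : HasDerivAt (fun s => h s * (x - y)) (deriv h r * (x - y)) r :=
    (hhd r).hasDerivAt.mul_const _
  have htotal : HasDerivAt (fun s => h s * (x - y) - (Ψ (h s) + B s))
      (deriv h r * (x - y) - ((x - y) * deriv h r + c)) r :=
    hlin.sub (hΨc.add hB)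
  have hval : deriv h r * (x - y) - ((x - y) * deriv h r + c) = -c := by ring
  rw [hval] at htotal
  refine htotal.congr_of_eventuallyEq ?_
  filter_upwards [Ioi_mem_nhds hr] with s hs
  have hs : τ < s := hs
  -- pointwise rewrite of the integrand
  have hpt : ∀ θ : ℝ, conjFn f (deriv f (h s * Real.exp (β θ))) * Real.exp (-β θ)
      = h s * deriv f (h s * Real.exp (β θ))
        - f (h s * Real.exp (β θ)) * Real.exp (-β θ) := by
    intro θ
    rw [conj_deriv hfd hconv]
    have h1 : Real.exp (β θ) * Real.exp (-β θ) = 1 := by rw [← Real.exp_add]; simp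
    linear_combination h s * deriv f (h s * Real.exp (β θ)) * h1
  have hD : Continuous fun θ => deriv f (h s * Real.exp (β θ)) :=
    hdc.comp (continuous_const.mul (Real.continuous_exp.comp hβc))
  have hfu : Continuous fun θ => f (h s * Real.exp (β θ)) * Real.exp (-β θ) :=
    (hfc.comp (continuous_const.mul (Real.continuous_exp.comp hβc))).mul
      (Real.continuous_exp.comp hβc.neg)
  calc (∫ θ in τ..s, conjFn f (deriv f (h s * Real.exp (β θ))) * Real.exp (-β θ))
      = ∫ θ in τ..s, (h s * deriv f (h s * Real.exp (β θ))
          - f (h s * Real.exp (β θ)) * Real.exp (-β θ)) := by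
        simp only [hpt]
    _ = (∫ θ in τ..s, h s * deriv f (h s * Real.exp (β θ)))
          - ∫ θ in τ..s, f (h s * Real.exp (β θ)) * Real.exp (-β θ) :=
        intervalIntegral.integral_sub
          ((continuous_const.mul hD).intervalIntegrable τ s)
          (hfu.intervalIntegrable τ s)
    _ = h s * (x - y) - (Ψ (h s) + B s) := by
        rw [intervalIntegral.integral_const_mul, ← hh s hs]
        congr 1
        rw [hΨdef, hBdef]
        exact (intervalIntegral.integral_add_adjacent_intervals
          (hfu.intervalIntegrable τ r) (hfu.intervalIntegrable r s)).symm
end
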